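/- Let F be a minimal domination imperfect graph with minimum dominating set {u,v} (u adjacent to v) and partition V(F) = A ∪ B ∪ C ∪ {u,v} as in Lemma 1. If a ∈ A and c ∈ B are nonadjacent, then {a, c} dominates the subgraph induced by A ∪ B, provided F contains none of the graphs G_1, G_2, G_3 (double star S_{2,2}, and the two graphs obtained from S_{2,2} by adding one or two edges between leaves on opposite sides so that γ = 2 < i = 3 is preserved) as induced subgraphs. -/

import Mathlib

open SimpleGraph

/-- `D` is a dominating set: every vertex outside `D` has a neighbor in `D`. -/
def IsDominating {V : Type*} (G : SimpleGraph V) (D : Set V) : Prop :=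
  ∀ v ∉ D, ∃ u ∈ D, G.Adj u v

/-- `S` is an independent set. -/
def IsIndepSet {V : Type*} (G : SimpleGraph V) (S : Set V) : Prop :=
  ∀ u ∈ S, ∀ v ∈ S, ¬ G.Adj u v

/-- `S` is a maximal independent set. -/
def IsMaxIndep {V : Type*} (G : SimpleGraph V) (S : Set V) : Prop :=
  _root_.IsIndepSet G S ∧ ∀ T, _root_.IsIndepSet G T → S ⊆ T → T = S

/-- The domination number γ(G). -/
noncomputable def domNum {V : Type*} [Fintype V] (G : SimpleGraph V) : ℕ :=
  sInf {n | ∃ D : Finset V, IsDominating G ↑D ∧ D.card = n}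

/-- The independent domination number i(G): minimum size of a maximal independent set. -/
noncomputable def indomNum {V : Type*} [Fintype V] (G : SimpleGraph V) : ℕ :=
  sInf {n | ∃ S : Finset V, IsMaxIndep G ↑S ∧ S.card = n}

/-- `G` is domination perfect: γ(H) = i(H) for every induced subgraph `H`. -/
def DomPerfect {V : Type*} [Fintype V] (G : SimpleGraph V) : Prop :=
  ∀ s : Finset V, domNum (G.induce (↑s : Set V)) = indomNum (G.induce (↑s : Set V))

/-- `G` is minimal domination imperfect. -/
def MinImperfect {V : Type*} [Fintype V] (G : SimpleGraph V) : Prop :=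
  ¬ DomPerfect G ∧ ∀ s : Finset V, s ≠ Finset.univ → DomPerfect (G.induce (↑s : Set V))

/-- The double star S_{2,2}: centers 0,1; leaves 2,3 at 0 and 4,5 at 1. -/
def doubleStar : SimpleGraph (Fin 6) :=
  SimpleGraph.fromRel (fun a b =>
    (a = 0 ∧ b = 1) ∨ (a = 0 ∧ b = 2) ∨ (a = 0 ∧ b = 3) ∨ (a = 1 ∧ b = 4) ∨ (a = 1 ∧ b = 5))

/-- G₂ : the double star plus the edge between leaf 2 (at 0) and leaf 4 (at 1). -/
def graphG2 : SimpleGraph (Fin 6) :=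
  SimpleGraph.fromRel (fun a b =>
    (a = 0 ∧ b = 1) ∨ (a = 0 ∧ b = 2) ∨ (a = 0 ∧ b = 3) ∨ (a = 1 ∧ b = 4) ∨ (a = 1 ∧ b = 5) ∨
    (a = 2 ∧ b = 4))

/-- G₃ : the double star plus two cross edges forming a path 2–4–3 among the leaves. -/
def graphG3 : SimpleGraph (Fin 6) :=
  SimpleGraph.fromRel (fun a b =>
    (a = 0 ∧ b = 1) ∨ (a = 0 ∧ b = 2) ∨ (a = 0 ∧ b = 3) ∨ (a = 1 ∧ b = 4) ∨ (a = 1 ∧ b = 5) ∨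
    (a = 2 ∧ b = 4) ∨ (a = 3 ∧ b = 4))

/-! ### Auxiliary machinery -/

/-- Tuple of six vertices as a function on `Fin 6`. -/
def f6 {V : Type*} (p0 p1 p2 p3 p4 p5 : V) : Fin 6 → V := fun i =>
  if i = 0 then p0 else if i = 1 then p1 else if i = 2 then p2
  else if i = 3 then p3 else if i = 4 then p4 else p5

lemma emb1 {V : Type*} {F : SimpleGraph V} (p0 p1 p2 p3 p4 p5 : V)
    (d01 : p0 ≠ p1) (d02 : p0 ≠ p2) (d03 : p0 ≠ p3) (d04 : p0 ≠ p4) (d05 : p0 ≠ p5)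
    (d12 : p1 ≠ p2) (d13 : p1 ≠ p3) (d14 : p1 ≠ p4) (d15 : p1 ≠ p5)
    (d23 : p2 ≠ p3) (d24 : p2 ≠ p4) (d25 : p2 ≠ p5)
    (d34 : p3 ≠ p4) (d35 : p3 ≠ p5) (d45 : p4 ≠ p5)
    (e01 : F.Adj p0 p1) (e02 : F.Adj p0 p2) (e03 : F.Adj p0 p3)
    (e14 : F.Adj p1 p4) (e15 : F.Adj p1 p5)
    (n04 : ¬F.Adj p0 p4) (n05 : ¬F.Adj p0 p5) (n12 : ¬F.Adj p1 p2) (n13 : ¬F.Adj p1 p3)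
    (n23 : ¬F.Adj p2 p3) (n24 : ¬F.Adj p2 p4) (n25 : ¬F.Adj p2 p5)
    (n34 : ¬F.Adj p3 p4) (n35 : ¬F.Adj p3 p5) (n45 : ¬F.Adj p4 p5) :
    Nonempty (doubleStar ↪g F) := by
  have e01' := e01.symm; have e02' := e02.symm; have e03' := e03.symm
  have e14' := e14.symm; have e15' := e15.symm
  have n04' : ¬F.Adj p4 p0 := fun h => n04 h.symm
  have n05' : ¬F.Adj p5 p0 := fun h => n05 h.symm
  have n12' : ¬F.Adj p2 p1 := fun h => n12 h.symm
  have n13' : ¬F.Adj p3 p1 := fun h => n13 h.symm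
  have n23' : ¬F.Adj p3 p2 := fun h => n23 h.symm
  have n24' : ¬F.Adj p4 p2 := fun h => n24 h.symm
  have n25' : ¬F.Adj p5 p2 := fun h => n25 h.symm
  have n34' : ¬F.Adj p4 p3 := fun h => n34 h.symm
  have n35' : ¬F.Adj p5 p3 := fun h => n35 h.symm
  have n45' : ¬F.Adj p5 p4 := fun h => n45 h.symm
  refine ⟨⟨f6 p0 p1 p2 p3 p4 p5, ?_⟩, @fun i j => ?_⟩
  · intro i j h
    fin_cases i <;> fin_cases j <;> simp_all [f6]
  · show F.Adj (f6 p0 p1 p2 p3 p4 p5 i) (f6 p0 p1 p2 p3 p4 p5 j) ↔ _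
    fin_cases i <;> fin_cases j <;>
      simp_all [doubleStar, SimpleGraph.fromRel_adj, SimpleGraph.irrefl, f6]

lemma emb2 {V : Type*} {F : SimpleGraph V} (p0 p1 p2 p3 p4 p5 : V)
    (d01 : p0 ≠ p1) (d02 : p0 ≠ p2) (d03 : p0 ≠ p3) (d04 : p0 ≠ p4) (d05 : p0 ≠ p5)
    (d12 : p1 ≠ p2) (d13 : p1 ≠ p3) (d14 : p1 ≠ p4) (d15 : p1 ≠ p5)
    (d23 : p2 ≠ p3) (d24 : p2 ≠ p4) (d25 : p2 ≠ p5)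
    (d34 : p3 ≠ p4) (d35 : p3 ≠ p5) (d45 : p4 ≠ p5)
    (e01 : F.Adj p0 p1) (e02 : F.Adj p0 p2) (e03 : F.Adj p0 p3)
    (e14 : F.Adj p1 p4) (e15 : F.Adj p1 p5) (e24 : F.Adj p2 p4)
    (n04 : ¬F.Adj p0 p4) (n05 : ¬F.Adj p0 p5) (n12 : ¬F.Adj p1 p2) (n13 : ¬F.Adj p1 p3)
    (n23 : ¬F.Adj p2 p3) (n25 : ¬F.Adj p2 p5)
    (n34 : ¬F.Adj p3 p4) (n35 : ¬F.Adj p3 p5) (n45 : ¬F.Adj p4 p5) :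
    Nonempty (graphG2 ↪g F) := by
  have e01' := e01.symm; have e02' := e02.symm; have e03' := e03.symm
  have e14' := e14.symm; have e15' := e15.symm; have e24' := e24.symm
  have n04' : ¬F.Adj p4 p0 := fun h => n04 h.symm
  have n05' : ¬F.Adj p5 p0 := fun h => n05 h.symm
  have n12' : ¬F.Adj p2 p1 := fun h => n12 h.symm
  have n13' : ¬F.Adj p3 p1 := fun h => n13 h.symm
  have n23' : ¬F.Adj p3 p2 := fun h => n23 h.symm
  have n25' : ¬F.Adj p5 p2 := fun h => n25 h.symm
  have n34' : ¬F.Adj p4 p3 := fun h => n34 h.symm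
  have n35' : ¬F.Adj p5 p3 := fun h => n35 h.symm
  have n45' : ¬F.Adj p5 p4 := fun h => n45 h.symm
  refine ⟨⟨f6 p0 p1 p2 p3 p4 p5, ?_⟩, @fun i j => ?_⟩
  · intro i j h
    fin_cases i <;> fin_cases j <;> simp_all [f6]
  · show F.Adj (f6 p0 p1 p2 p3 p4 p5 i) (f6 p0 p1 p2 p3 p4 p5 j) ↔ _
    fin_cases i <;> fin_cases j <;>
      simp_all [graphG2, SimpleGraph.fromRel_adj, SimpleGraph.irrefl, f6]

lemma emb3 {V : Type*} {F : SimpleGraph V} (p0 p1 p2 p3 p4 p5 : V)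
    (d01 : p0 ≠ p1) (d02 : p0 ≠ p2) (d03 : p0 ≠ p3) (d04 : p0 ≠ p4) (d05 : p0 ≠ p5)
    (d12 : p1 ≠ p2) (d13 : p1 ≠ p3) (d14 : p1 ≠ p4) (d15 : p1 ≠ p5)
    (d23 : p2 ≠ p3) (d24 : p2 ≠ p4) (d25 : p2 ≠ p5)
    (d34 : p3 ≠ p4) (d35 : p3 ≠ p5) (d45 : p4 ≠ p5)
    (e01 : F.Adj p0 p1) (e02 : F.Adj p0 p2) (e03 : F.Adj p0 p3)
    (e14 : F.Adj p1 p4) (e15 : F.Adj p1 p5) (e24 : F.Adj p2 p4) (e34 : F.Adj p3 p4)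
    (n04 : ¬F.Adj p0 p4) (n05 : ¬F.Adj p0 p5) (n12 : ¬F.Adj p1 p2) (n13 : ¬F.Adj p1 p3)
    (n23 : ¬F.Adj p2 p3) (n25 : ¬F.Adj p2 p5)
    (n35 : ¬F.Adj p3 p5) (n45 : ¬F.Adj p4 p5) :
    Nonempty (graphG3 ↪g F) := by
  have e01' := e01.symm; have e02' := e02.symm; have e03' := e03.symm
  have e14' := e14.symm; have e15' := e15.symm; have e24' := e24.symm
  have e34' := e34.symm
  have n04' : ¬F.Adj p4 p0 := fun h => n04 h.symm
  have n05' : ¬F.Adj p5 p0 := fun h => n05 h.symm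
  have n12' : ¬F.Adj p2 p1 := fun h => n12 h.symm
  have n13' : ¬F.Adj p3 p1 := fun h => n13 h.symm
  have n23' : ¬F.Adj p3 p2 := fun h => n23 h.symm
  have n25' : ¬F.Adj p5 p2 := fun h => n25 h.symm
  have n35' : ¬F.Adj p5 p3 := fun h => n35 h.symm
  have n45' : ¬F.Adj p5 p4 := fun h => n45 h.symm
  refine ⟨⟨f6 p0 p1 p2 p3 p4 p5, ?_⟩, @fun i j => ?_⟩
  · intro i j h
    fin_cases i <;> fin_cases j <;> simp_all [f6]
  · show F.Adj (f6 p0 p1 p2 p3 p4 p5 i) (f6 p0 p1 p2 p3 p4 p5 j) ↔ _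
    fin_cases i <;> fin_cases j <;>
      simp_all [graphG3, SimpleGraph.fromRel_adj, SimpleGraph.irrefl, f6]

lemma isDominating_map {V W : Type*} {G : SimpleGraph V} {H : SimpleGraph W}
    (e : G ≃g H) {D : Set V} (h : IsDominating G D) : IsDominating H (⇑e '' D) := by
  intro w hw
  have hsw : e.symm w ∉ D := fun hx => hw ⟨e.symm w, hx, e.apply_symm_apply w⟩
  obtain ⟨x, hx, hadj⟩ := h (e.symm w) hsw
  refine ⟨e x, ⟨x, hx, rfl⟩, ?_⟩
  have h2 : H.Adj (e x) (e (e.symm w)) := e.map_adj_iff.mpr hadj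
  rwa [e.apply_symm_apply] at h2

lemma isIndepSet_map {V W : Type*} {G : SimpleGraph V} {H : SimpleGraph W}
    (e : G ≃g H) {S : Set V} (h : _root_.IsIndepSet G S) : _root_.IsIndepSet H (⇑e '' S) := by
  rintro _ ⟨x, hx, rfl⟩ _ ⟨y, hy, rfl⟩ hadj
  exact h x hx y hy (e.map_adj_iff.mp hadj)

lemma isMaxIndep_map {V W : Type*} {G : SimpleGraph V} {H : SimpleGraph W}
    (e : G ≃g H) {S : Set V} (h : IsMaxIndep G S) : IsMaxIndep H (⇑e '' S) := by
  refine ⟨isIndepSet_map e h.1, fun T hT hsub => ?_⟩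
  have hsub' : S ⊆ ⇑e.symm '' T := fun x hx =>
    ⟨e x, hsub ⟨x, hx, rfl⟩, e.symm_apply_apply x⟩
  have hTS := h.2 _ (isIndepSet_map e.symm hT) hsub'
  have hT' : T = ⇑e '' (⇑e.symm '' T) := by
    rw [Set.image_image]
    simp
  rw [hT', hTS]

lemma domNum_map {V W : Type*} [Fintype V] [Fintype W] {G : SimpleGraph V}
    {H : SimpleGraph W} (e : G ≃g H) : domNum G = domNum H := by
  unfold domNum
  congr 1
  ext n
  constructor
  · rintro ⟨D, hdom, rfl⟩
    refine ⟨D.map e.toEquiv.toEmbedding, ?_, Finset.card_map _⟩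
    rw [Finset.coe_map]
    exact isDominating_map e hdom
  · rintro ⟨D, hdom, rfl⟩
    refine ⟨D.map e.symm.toEquiv.toEmbedding, ?_, Finset.card_map _⟩
    rw [Finset.coe_map]
    exact isDominating_map e.symm hdom

lemma indomNum_map {V W : Type*} [Fintype V] [Fintype W] {G : SimpleGraph V}
    {H : SimpleGraph W} (e : G ≃g H) : indomNum G = indomNum H := by
  unfold indomNum
  congr 1
  ext n
  constructor
  · rintro ⟨D, hmax, rfl⟩
    refine ⟨D.map e.toEquiv.toEmbedding, ?_, Finset.card_map _⟩
    rw [Finset.coe_map]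
    exact isMaxIndep_map e hmax
  · rintro ⟨D, hmax, rfl⟩
    refine ⟨D.map e.symm.toEquiv.toEmbedding, ?_, Finset.card_map _⟩
    rw [Finset.coe_map]
    exact isMaxIndep_map e.symm hmax

def isoUniv {V : Type*} [Fintype V] (G : SimpleGraph V) :
    (G.induce (↑(Finset.univ : Finset V) : Set V)) ≃g G where
  toEquiv := Equiv.subtypeUnivEquiv (fun x => Finset.mem_coe.mpr (Finset.mem_univ x))
  map_rel_iff' := Iff.rfl

lemma domPerfect_self {V : Type*} [Fintype V] {G : SimpleGraph V} (h : DomPerfect G) :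
    domNum G = indomNum G := by
  have h2 := h Finset.univ
  rwa [domNum_map (isoUniv G), indomNum_map (isoUniv G)] at h2

theorem stmt14 {V : Type*} [Fintype V] (F : SimpleGraph V)
    (hmin : MinImperfect F)
    (u v : V) (huv : F.Adj u v)
    (hD : IsDominating F {u, v}) (hγ : domNum F = 2)
    (A B : Set V)
    (hA : A = {x | x ∉ ({u, v} : Set V) ∧ ({u, v} : Set V) ∩ {w | F.Adj w x} = {u}})
    (hB : B = {x | x ∉ ({u, v} : Set V) ∧ ({u, v} : Set V) ∩ {w | F.Adj w x} = {v}})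
    (hfree1 : IsEmpty (doubleStar ↪g F))
    (hfree2 : IsEmpty (graphG2 ↪g F))
    (hfree3 : IsEmpty (graphG3 ↪g F))
    (a c : V) (ha : a ∈ A) (hc : c ∈ B) (hac : ¬ F.Adj a c) :
    ∀ x ∈ A ∪ B, x = a ∨ x = c ∨ F.Adj a x ∨ F.Adj c x := by
  classical
  -- facts about members of A and B
  have memA : ∀ y ∈ A, y ≠ u ∧ y ≠ v ∧ F.Adj u y ∧ ¬ F.Adj v y := by
    intro y hy
    rw [hA] at hy
    obtain ⟨hy1, hy2⟩ := hy
    have h1 : F.Adj u y := by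
      have hu : u ∈ ({u, v} : Set V) ∩ {w | F.Adj w y} := by rw [hy2]; rfl
      exact hu.2
    have h2 : ¬ F.Adj v y := by
      intro h
      have hv : v ∈ ({u, v} : Set V) ∩ {w | F.Adj w y} := ⟨Or.inr rfl, h⟩
      rw [hy2] at hv
      exact huv.ne hv.symm
    exact ⟨fun hh => hy1 (hh ▸ Or.inl rfl), fun hh => hy1 (hh ▸ Or.inr rfl), h1, h2⟩
  have memB : ∀ y ∈ B, y ≠ u ∧ y ≠ v ∧ F.Adj v y ∧ ¬ F.Adj u y := by
    intro y hy
    rw [hB] at hy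
    obtain ⟨hy1, hy2⟩ := hy
    have h1 : F.Adj v y := by
      have hv : v ∈ ({u, v} : Set V) ∩ {w | F.Adj w y} := by rw [hy2]; rfl
      exact hv.2
    have h2 : ¬ F.Adj u y := by
      intro h
      have hu : u ∈ ({u, v} : Set V) ∩ {w | F.Adj w y} := ⟨Or.inl rfl, h⟩
      rw [hy2] at hu
      exact huv.ne hu
    exact ⟨fun hh => hy1 (hh ▸ Or.inl rfl), fun hh => hy1 (hh ▸ Or.inr rfl), h1, h2⟩
  obtain ⟨hau, hav, hua, hva⟩ := memA a ha
  obtain ⟨hcu, hcv, hvc, huc⟩ := memB c hc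
  -- F itself is imperfect
  have hneq : domNum F ≠ indomNum F := by
    intro hEq
    apply hmin.1
    intro s
    by_cases hs : s = Finset.univ
    · subst hs
      rw [domNum_map (isoUniv F), indomNum_map (isoUniv F)]
      exact hEq
    · exact domPerfect_self (hmin.2 s hs)
  -- no 2-element maximal independent set: every independent pair extends
  have key : ∀ p q : V, p ≠ q → ¬F.Adj p q →
      ∃ w, w ≠ p ∧ w ≠ q ∧ ¬F.Adj p w ∧ ¬F.Adj q w := by
    intro p q hpqne hpq
    by_contra hcon
    push_neg at hcon
    have hmax : IsMaxIndep F ({p, q} : Set V) := by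
      constructor
      · intro x hx y hy hadj
        rcases hx with rfl | hx
        · rcases hy with rfl | hy
          · exact F.irrefl hadj
          · rw [Set.mem_singleton_iff] at hy; subst hy; exact hpq hadj
        · rw [Set.mem_singleton_iff] at hx; subst hx
          rcases hy with rfl | hy
          · exact hpq hadj.symm
          · rw [Set.mem_singleton_iff] at hy; subst hy; exact F.irrefl hadj
      · intro T hT hsub
        refine Set.Subset.antisymm ?_ hsub
        intro w hw
        by_contra hwmem
        simp only [Set.mem_insert_iff, Set.mem_singleton_iff, not_or] at hwmem
        have h1 : ¬F.Adj p w := hT p (hsub (Or.inl rfl)) w hw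
        have h2 : ¬F.Adj q w := hT q (hsub (Or.inr rfl)) w hw
        exact h2 (hcon w hwmem.1 hwmem.2 h1)
    have hS : ((({p, q} : Finset V) : Set V)) = ({p, q} : Set V) := by simp
    have hmem2 : 2 ∈ {n | ∃ S : Finset V, IsMaxIndep F ↑S ∧ S.card = n} :=
      ⟨{p, q}, by rw [hS]; exact hmax, Finset.card_pair hpqne⟩
    have hle : indomNum F ≤ 2 := Nat.sInf_le hmem2
    have hge : 2 ≤ indomNum F := by
      have hnon : {n | ∃ S : Finset V, IsMaxIndep F ↑S ∧ S.card = n}.Nonempty := ⟨2, hmem2⟩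
      obtain ⟨S, hSmax, hScard⟩ := Nat.sInf_mem hnon
      have hdom : IsDominating F ↑S := by
        intro w hw
        by_contra hno
        push_neg at hno
        have hind : _root_.IsIndepSet F (insert w (↑S : Set V)) := by
          intro p hp q hq hadj
          rcases Set.mem_insert_iff.mp hp with hp' | hp'
          · rcases Set.mem_insert_iff.mp hq with hq' | hq'
            · subst hp'; subst hq'; exact F.irrefl hadj
            · subst hp'; exact hno q hq' hadj.symm
          · rcases Set.mem_insert_iff.mp hq with hq' | hq'
            · subst hq'; exact hno p hp' hadj
            · exact hSmax.1 p hp' q hq' hadj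
        have heq := hSmax.2 _ hind (Set.subset_insert _ _)
        rw [← heq] at hw
        exact hw (Set.mem_insert _ _)
      have h2S : 2 ≤ S.card := by
        rw [← hγ]
        exact Nat.sInf_le ⟨S, hdom, rfl⟩
      exact le_trans h2S (le_of_eq hScard)
    exact hneq (hγ.trans (le_antisymm hle hge).symm)
  -- main argument
  intro x hx
  by_contra hcon
  push_neg at hcon
  obtain ⟨hxa, hxc, hax, hcx⟩ := hcon
  rcases hx with hx | hx
  · -- x ∈ A
    obtain ⟨hxu, hxv, hux, hvx⟩ := memA x hx
    obtain ⟨b, hbu, hbc, hub, hcb⟩ := key u c (Ne.symm hcu) huc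
    have hbv : b ≠ v := by rintro rfl; exact hcb hvc.symm
    have hvb : F.Adj v b := by
      obtain ⟨d, hd, hdb⟩ := hD b (by
        intro h
        rcases h with h | h
        · exact hbu h
        · exact hbv h)
      rcases hd with rfl | hd
      · exact absurd hdb hub
      · rw [Set.mem_singleton_iff] at hd; subst hd; exact hdb
    have hba : b ≠ a := by rintro rfl; exact hub hua
    have hbx : b ≠ x := by rintro rfl; exact hub hux
    have dac : a ≠ c := by rintro rfl; exact hva hvc
    have dxc : x ≠ c := by rintro rfl; exact hvx hvc
    have nxc : ¬F.Adj x c := fun h => hcx h.symm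
    have nbc : ¬F.Adj b c := fun h => hcb h.symm
    by_cases hab : F.Adj a b
    · by_cases hxb : F.Adj x b
      · -- G3 : u v a x b c
        obtain ⟨e⟩ := emb3 (F := F) u v a x b c
          huv.ne (Ne.symm hau) (Ne.symm hxu) (Ne.symm hbu) (Ne.symm hcu)
          (Ne.symm hav) (Ne.symm hxv) (Ne.symm hbv) (Ne.symm hcv)
          (Ne.symm hxa) (Ne.symm hba) dac (Ne.symm hbx) dxc hbc
          huv hua hux hvb hvc hab hxb
          hub huc hva hvx hax hac nxc nbc
        exact hfree3.false e
      · -- G2 : u v a x b c with edge a b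
        obtain ⟨e⟩ := emb2 (F := F) u v a x b c
          huv.ne (Ne.symm hau) (Ne.symm hxu) (Ne.symm hbu) (Ne.symm hcu)
          (Ne.symm hav) (Ne.symm hxv) (Ne.symm hbv) (Ne.symm hcv)
          (Ne.symm hxa) (Ne.symm hba) dac (Ne.symm hbx) dxc hbc
          huv hua hux hvb hvc hab
          hub huc hva hvx hax hac hxb nxc nbc
        exact hfree2.false e
    · by_cases hxb : F.Adj x b
      · -- G2 : u v x a b c with edge x b
        obtain ⟨e⟩ := emb2 (F := F) u v x a b c
          huv.ne (Ne.symm hxu) (Ne.symm hau) (Ne.symm hbu) (Ne.symm hcu)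
          (Ne.symm hxv) (Ne.symm hav) (Ne.symm hbv) (Ne.symm hcv)
          hxa (Ne.symm hbx) dxc (Ne.symm hba) dac hbc
          huv hux hua hvb hvc hxb
          hub huc hvx hva (fun h => hax h.symm) nxc hab hac nbc
        exact hfree2.false e
      · -- G1 : u v a x b c
        obtain ⟨e⟩ := emb1 (F := F) u v a x b c
          huv.ne (Ne.symm hau) (Ne.symm hxu) (Ne.symm hbu) (Ne.symm hcu)
          (Ne.symm hav) (Ne.symm hxv) (Ne.symm hbv) (Ne.symm hcv)
          (Ne.symm hxa) (Ne.symm hba) dac (Ne.symm hbx) dxc hbc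
          huv hua hux hvb hvc
          hub huc hva hvx hax hab hac hxb nxc nbc
        exact hfree1.false e
  · -- x ∈ B
    obtain ⟨hxu, hxv, hvx, hux⟩ := memB x hx
    obtain ⟨b, hbv, hba, hvb, hab⟩ := key v a (Ne.symm hav) hva
    have hbu : b ≠ u := by rintro rfl; exact hab hua.symm
    have hub : F.Adj u b := by
      obtain ⟨d, hd, hdb⟩ := hD b (by
        intro h
        rcases h with h | h
        · exact hbu h
        · exact hbv h)
      rcases hd with rfl | hd
      · exact hdb
      · rw [Set.mem_singleton_iff] at hd; subst hd; exact absurd hdb hvb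
    have hbc : b ≠ c := by rintro rfl; exact huc hub
    have hbx : b ≠ x := by rintro rfl; exact hux hub
    have dca : c ≠ a := by rintro rfl; exact huc hua
    have dxa : x ≠ a := by rintro rfl; exact hux hua
    have nca : ¬F.Adj c a := fun h => hac h.symm
    have nxa : ¬F.Adj x a := fun h => hax h.symm
    have nba : ¬F.Adj b a := fun h => hab h.symm
    by_cases hcb : F.Adj c b
    · by_cases hxb : F.Adj x b
      · -- G3 : v u c x b a
        obtain ⟨e⟩ := emb3 (F := F) v u c x b a
          (Ne.symm huv.ne) (Ne.symm hcv) (Ne.symm hxv) (Ne.symm hbv) (Ne.symm hav)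
          (Ne.symm hcu) (Ne.symm hxu) (Ne.symm hbu) (Ne.symm hau)
          (Ne.symm hxc) (Ne.symm hbc) dca (Ne.symm hbx) dxa hba
          huv.symm hvc hvx hub hua hcb hxb
          hvb hva huc hux hcx nca nxa nba
        exact hfree3.false e
      · -- G2 : v u c x b a with edge c b
        obtain ⟨e⟩ := emb2 (F := F) v u c x b a
          (Ne.symm huv.ne) (Ne.symm hcv) (Ne.symm hxv) (Ne.symm hbv) (Ne.symm hav)
          (Ne.symm hcu) (Ne.symm hxu) (Ne.symm hbu) (Ne.symm hau)
          (Ne.symm hxc) (Ne.symm hbc) dca (Ne.symm hbx) dxa hba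
          huv.symm hvc hvx hub hua hcb
          hvb hva huc hux hcx nca hxb nxa nba
        exact hfree2.false e
    · by_cases hxb : F.Adj x b
      · -- G2 : v u x c b a with edge x b
        obtain ⟨e⟩ := emb2 (F := F) v u x c b a
          (Ne.symm huv.ne) (Ne.symm hxv) (Ne.symm hcv) (Ne.symm hbv) (Ne.symm hav)
          (Ne.symm hxu) (Ne.symm hcu) (Ne.symm hbu) (Ne.symm hau)
          hxc (Ne.symm hbx) dxa (Ne.symm hbc) dca hba
          huv.symm hvx hvc hub hua hxb
          hvb hva hux huc (fun h => hcx h.symm) nxa hcb nca nba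
        exact hfree2.false e
      · -- G1 : v u c x b a
        obtain ⟨e⟩ := emb1 (F := F) v u c x b a
          (Ne.symm huv.ne) (Ne.symm hcv) (Ne.symm hxv) (Ne.symm hbv) (Ne.symm hav)
          (Ne.symm hcu) (Ne.symm hxu) (Ne.symm hbu) (Ne.symm hau)
          (Ne.symm hxc) (Ne.symm hbc) dca (Ne.symm hbx) dxa hba
          huv.symm hvc hvx hub hua
          hvb hva huc hux hcx hcb nca hxb nxa nba
        exact hfree1.false e
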